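/- Let L be a field and P ∈ L[T] a separable polynomial (P and its derivative generate the unit ideal). Then for every n ≥ 1, the quotient map L[T]/(Pⁿ) → L[T]/(P) admits a section which is an L-algebra homomorphism. -/

import Mathlib

open Polynomial
set_option synthInstance.maxHeartbeats 1000000
set_option maxHeartbeats 2000000

/-- A ring is adically complete with respect to any nilpotent ideal. -/
theorem isAdicComplete_of_pow_eq_bot {R : Type*} [CommRing R] (I : Ideal R) (n : ℕ)
    (h : I ^ n = ⊥) : IsAdicComplete I R := by
  have hbot : (I ^ n • ⊤ : Ideal R) = ⊥ := by rw [smul_eq_mul, Ideal.mul_top, h]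
  refine { toIsHausdorff := ⟨fun x hx => ?_⟩, toIsPrecomplete := ⟨fun f hf => ?_⟩ }
  · have := (hx n)
    rw [SModEq.zero, hbot] at this
    simpa using this
  · refine ⟨f n, fun k => ?_⟩
    rcases le_total k n with hk | hk
    · exact hf hk
    · have : f n ≡ f k [SMOD (I ^ n • ⊤ : Ideal R)] := hf hk
      rw [SModEq, hbot] at this
      have heq : f n = f k := by
        simpa [sub_eq_zero] using (Submodule.Quotient.eq (⊥ : Ideal R)).mp this
      rw [← heq]
  
theorem quotient_pow_section_of_separable
    {L : Type*} [Field L] (P : L[X]) (hP : P.Separable) (n : ℕ) (hn : 1 ≤ n) :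
    ∃ s : (L[X] ⧸ Ideal.span {P}) →ₐ[L] (L[X] ⧸ Ideal.span {P ^ n}),
      (Ideal.Quotient.factor (S := Ideal.span {P ^ n}) (T := Ideal.span {P})
        (Ideal.span_singleton_le_span_singleton.mpr ⟨P ^ (n - 1), by
          rw [← pow_succ']
          congr 1
          omega⟩)).comp s.toRingHom = RingHom.id _ := by
  classical
  have hP0 : P ≠ 0 := hP.ne_zero
  let mk : L[X] →+* L[X] ⧸ Ideal.span {P ^ n} := Ideal.Quotient.mk (Ideal.span {P ^ n})
  have hmkPn : mk (P ^ n) = 0 := Ideal.Quotient.eq_zero_iff_mem.mpr (Ideal.subset_span rfl)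
  -- the nilpotent ideal
  let I : Ideal (L[X] ⧸ Ideal.span {P ^ n}) := Ideal.span {mk P}
  have hIn : I ^ n = ⊥ := by
    rw [Ideal.span_singleton_pow, Ideal.span_singleton_eq_bot, ← map_pow]
    exact hmkPn
  haveI : IsAdicComplete I (L[X] ⧸ Ideal.span {P ^ n}) := isAdicComplete_of_pow_eq_bot I n hIn
  -- monic rescaling of P
  have hc0 : P.leadingCoeff ≠ 0 := leadingCoeff_ne_zero.mpr hP0
  set Q : L[X] := P * C P.leadingCoeff⁻¹ with hQ
  have hQmonic : Q.Monic := monic_mul_leadingCoeff_inv hP0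
  have hPQ : P = Q * C P.leadingCoeff := by
    rw [hQ, mul_assoc, ← C_mul, inv_mul_cancel₀ hc0, C_1, mul_one]
  -- the polynomial over the quotient and the approximate root
  let φ : L →+* L[X] ⧸ Ideal.span {P ^ n} := mk.comp C
  have hφalg : φ = algebraMap L (L[X] ⧸ Ideal.span {P ^ n}) := rfl
  let f : (L[X] ⧸ Ideal.span {P ^ n})[X] := Q.map φ
  have hfmonic : f.Monic := hQmonic.map φ
  have heval : ∀ g : L[X], (g.map φ).eval (mk X) = mk g := by
    intro g
    rw [eval_map]
    exact (Polynomial.hom_eval₂ g C mk X).symm.trans (by simp)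
  have hev0 : f.eval (mk X) ∈ I := by
    rw [heval Q]
    have : mk Q = mk P * mk (C P.leadingCoeff⁻¹) := by rw [← map_mul, ← hQ]
    rw [this]
    exact Ideal.mul_mem_right _ _ (Ideal.subset_span rfl)
  -- derivative is a unit
  obtain ⟨u, v, huv⟩ := hP
  have hP'unit : IsUnit (mk (derivative P)) := by
    have h1 : mk v * mk (derivative P) = 1 - mk u * mk P := by
      have h2 : v * derivative P = 1 - u * P := by linear_combination huv
      rw [← map_mul, h2, map_sub, map_one, map_mul]
    have hnil : IsNilpotent (mk u * mk P) := by
      refine ⟨n, ?_⟩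
      rw [mul_pow, ← map_pow, ← map_pow, hmkPn, mul_zero]
    have hu1 : IsUnit (1 - mk u * mk P) := IsNilpotent.isUnit_one_sub hnil
    rw [← h1] at hu1
    exact isUnit_of_mul_isUnit_right hu1
  have hderiv : IsUnit (Ideal.Quotient.mk I (f.derivative.eval (mk X))) := by
    apply IsUnit.map
    show IsUnit (((Q.map φ).derivative).eval (mk X))
    rw [derivative_map, heval (derivative Q)]
    have hdQ : derivative Q = derivative P * C P.leadingCoeff⁻¹ := by
      rw [hQ, derivative_mul, derivative_C, mul_zero, add_zero]
    rw [hdQ, map_mul]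
    exact hP'unit.mul ((isUnit_C.mpr (isUnit_iff_ne_zero.mpr (inv_ne_zero hc0))).map mk)
  obtain ⟨a, ha, haI⟩ := HenselianRing.is_henselian f hfmonic (mk X) hev0 hderiv
  -- build the section
  have hrootP : (Polynomial.aeval a) P = 0 := by
    have hQa : (Polynomial.aeval a) Q = 0 := by
      have h3 := ha
      rw [Polynomial.IsRoot, eval_map, hφalg] at h3
      simpa [Polynomial.aeval_def] using h3
    have h5 : (Polynomial.aeval a) P = (Polynomial.aeval a) (Q * C P.leadingCoeff) :=
      congrArg _ hPQ
    rw [h5, map_mul, hQa, zero_mul]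
  refine ⟨Ideal.Quotient.liftₐ (Ideal.span {P}) (Polynomial.aeval a) (by
      intro g hg
      rw [Ideal.mem_span_singleton] at hg
      obtain ⟨g', rfl⟩ := hg
      rw [map_mul, hrootP, zero_mul]), ?_⟩
  apply Ideal.Quotient.ringHom_ext
  apply Polynomial.ringHom_ext
  · intro x
    simp only [RingHom.comp_apply, RingHom.id_apply, AlgHom.toRingHom_eq_coe, RingHom.coe_coe,
      Ideal.Quotient.liftₐ_apply, Ideal.Quotient.lift_mk, Polynomial.aeval_C]
    erw [Ideal.Quotient.lift_mk]
    rw [AlgHom.coe_toRingHom, Polynomial.aeval_C]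
    exact Ideal.Quotient.factor_mk (S := Ideal.span {P ^ n}) (T := Ideal.span {P}) _ (C x)
  · have hfac : ∀ b ∈ I, Ideal.Quotient.factor (S := Ideal.span {P ^ n}) (T := Ideal.span {P})
        (Ideal.span_singleton_le_span_singleton.mpr ⟨P ^ (n - 1), by
          rw [← pow_succ']; congr 1; omega⟩) b = 0 := by
      intro b hb
      rw [Ideal.mem_span_singleton] at hb
      obtain ⟨d, rfl⟩ := hb
      obtain ⟨d', rfl⟩ := Ideal.Quotient.mk_surjective d
      rw [← map_mul]
      show Ideal.Quotient.factor _ (mk (P * d')) = 0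
      rw [Ideal.Quotient.factor_mk]
      exact Ideal.Quotient.eq_zero_iff_mem.mpr
        (Ideal.mem_span_singleton.mpr ⟨d', rfl⟩)
    have key : Ideal.Quotient.factor (S := Ideal.span {P ^ n}) (T := Ideal.span {P})
        (Ideal.span_singleton_le_span_singleton.mpr ⟨P ^ (n - 1), by
          rw [← pow_succ']; congr 1; omega⟩) a
        = Ideal.Quotient.mk (Ideal.span {P}) X := by
      have h4 := hfac _ haI
      rw [map_sub, sub_eq_zero] at h4
      rw [h4]
      exact Ideal.Quotient.factor_mk _ _
    simp only [RingHom.comp_apply, RingHom.id_apply]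
    show Ideal.Quotient.factor _
      ((Ideal.Quotient.liftₐ (Ideal.span {P}) (Polynomial.aeval a) _)
        (Ideal.Quotient.mk (Ideal.span {P}) X)) = _
    rw [Ideal.Quotient.liftₐ_apply]
    erw [Ideal.Quotient.lift_mk]
    rw [AlgHom.coe_toRingHom,
      Polynomial.aeval_X]
    exact key
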